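/- arXiv:2206.09945 — 2 statements merged into one kernel-verified Lean document; each statement's English description precedes it below -/
import Mathlib

section
/- Assume (A12, A22) is observable and (A, B) is controllable, let B_x, C_x ∈ ℝ^{p×p} be invertible, let A_x ∈ ℝ^{p×p} and K ∈ ℝ^{(n−p)×p} be arbitrary, and define Â := [[A_x, B_x·A12],[0, A22 + K·A12]] ∈ ℝ^{n×n}, B̂ := [[A_x·B_x − B_x·A11 + B_x·A12·K, B_x·B1],[K·A12·K + A22·K − K·A11 − A21, K·B1 + B2]] ∈ ℝ^{n×(p+m)}, Ĉ := [C_x, 0] ∈ ℝ^{p×n}. Then for every μ ∈ ℂ the complexified stacked matrix [Â − μI_n; Ĉ] has full column rank n and the complexified matrix [Â − μI_n, B̂] has full row rank n; that is, the realization (Â, B̂, Ĉ) of the factorization [M N] is observable and controllable, hence minimal. -/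
open Matrix Polynomial

set_option synthInstance.maxHeartbeats 1000000
set_option maxHeartbeats 1000000

noncomputable section

/-- The field of real rational functions. -/
abbrev FF : Type := RatFunc ℝ

/-- The rational function `λ` (the image of the polynomial indeterminate `X`). -/
noncomputable def lam : FF := RatFunc.X

/-- Entrywise embedding of a real matrix into matrices over `FF`. -/
noncomputable def mapF {k l : Type} (M : Matrix k l ℝ) : Matrix k l FF :=
  M.map (algebraMap ℝ FF)

/-- The pencil `λ I - M` over `FF`, for a real square matrix `M`. -/
noncomputable def lamI {k : Type} [Fintype k] [DecidableEq k] (M : Matrix k k ℝ) :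
    Matrix k k FF := lam • (1 : Matrix k k FF) - mapF M

/-- Entrywise complexification of a real matrix. -/
def mapC {k l : Type} (M : Matrix k l ℝ) : Matrix k l ℂ :=
  M.map (algebraMap ℝ ℂ)

/-- A real rational function is stable if every complex root of its reduced denominator
has real part `< 0`. -/
def StableF (f : RatFunc ℝ) : Prop :=
  ∀ z : ℂ, ((f.denom).map (algebraMap ℝ ℂ)).IsRoot z → z.re < 0

/-- A real square matrix is Hurwitz if all roots of its characteristic polynomial
have real part `< 0`. -/
def IsHurwitz {k : Type} [Fintype k] [DecidableEq k] (M : Matrix k k ℝ) : Prop :=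
  ∀ z : ℂ, ((M.charpoly).map (algebraMap ℝ ℂ)).IsRoot z → z.re < 0

/-- `A_K := K A11 - K A12 K + A21 - A22 K`. -/
noncomputable def AKmat {p r : ℕ} (A11 : Matrix (Fin p) (Fin p) ℝ)
    (A12 : Matrix (Fin p) (Fin r) ℝ) (A21 : Matrix (Fin r) (Fin p) ℝ)
    (A22 : Matrix (Fin r) (Fin r) ℝ) (K : Matrix (Fin r) (Fin p) ℝ) :
    Matrix (Fin r) (Fin p) ℝ :=
  K * A11 - K * A12 * K + A21 - A22 * K

/-- The `W` member of the SRTR pair obtained from `K`. -/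
noncomputable def srtrW {p r : ℕ} (A11 : Matrix (Fin p) (Fin p) ℝ)
    (A12 : Matrix (Fin p) (Fin r) ℝ) (A21 : Matrix (Fin r) (Fin p) ℝ)
    (A22 : Matrix (Fin r) (Fin r) ℝ) (K : Matrix (Fin r) (Fin p) ℝ) :
    Matrix (Fin p) (Fin p) FF :=
  mapF (A11 - A12 * K) +
    mapF A12 * (lamI (A22 + K * A12))⁻¹ * mapF (AKmat A11 A12 A21 A22 K)

/-- The `V` member of the SRTR pair obtained from `K`. -/
noncomputable def srtrV {p r m : ℕ} (A12 : Matrix (Fin p) (Fin r) ℝ)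
    (A22 : Matrix (Fin r) (Fin r) ℝ) (B1 : Matrix (Fin p) (Fin m) ℝ)
    (B2 : Matrix (Fin r) (Fin m) ℝ) (K : Matrix (Fin r) (Fin p) ℝ) :
    Matrix (Fin p) (Fin m) FF :=
  mapF B1 + mapF A12 * (lamI (A22 + K * A12))⁻¹ * mapF (K * B1 + B2)

/-- The plant transfer function `G = [I_p 0] (λ I_n - A)⁻¹ B`. -/
noncomputable def plantG {p r m : ℕ} (A11 : Matrix (Fin p) (Fin p) ℝ)
    (A12 : Matrix (Fin p) (Fin r) ℝ) (A21 : Matrix (Fin r) (Fin p) ℝ)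
    (A22 : Matrix (Fin r) (Fin r) ℝ) (B1 : Matrix (Fin p) (Fin m) ℝ)
    (B2 : Matrix (Fin r) (Fin m) ℝ) : Matrix (Fin p) (Fin m) FF :=
  fromCols (1 : Matrix (Fin p) (Fin p) FF) (0 : Matrix (Fin p) (Fin r) FF) *
    (lamI (fromBlocks A11 A12 A21 A22))⁻¹ * mapF (fromRows B1 B2)

/-- `(A12, A22)` is observable: `[A22 - μ I ; A12]` has full column rank for all `μ : ℂ`. -/
def ObsPair {p r : ℕ} (A12 : Matrix (Fin p) (Fin r) ℝ)
    (A22 : Matrix (Fin r) (Fin r) ℝ) : Prop :=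
  ∀ μ : ℂ, (fromRows (mapC A22 - μ • (1 : Matrix (Fin r) (Fin r) ℂ)) (mapC A12)).rank = r

/-- `(A, B)` is controllable: `[A - μ I, B]` has full row rank for all `μ : ℂ`. -/
def CtrbPair {p r m : ℕ} (A : Matrix (Fin p ⊕ Fin r) (Fin p ⊕ Fin r) ℝ)
    (B : Matrix (Fin p ⊕ Fin r) (Fin m) ℝ) : Prop :=
  ∀ μ : ℂ, (fromCols (mapC A - μ • (1 : Matrix (Fin p ⊕ Fin r) (Fin p ⊕ Fin r) ℂ))
    (mapC B)).rank = p + r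

section Aux

open Matrix

variable {k l o : Type}

lemma rank_full_col_iff {m n : Type} [Fintype m] [Fintype n] [DecidableEq n] (A : Matrix m n ℂ) :
    A.rank = Fintype.card n ↔ ∀ v : n → ℂ, A *ᵥ v = 0 → v = 0 := by
  have h := LinearMap.finrank_range_add_finrank_ker A.mulVecLin
  rw [Module.finrank_pi] at h
  rw [Matrix.rank]
  constructor
  · intro hr v hv
    have hk : Module.finrank ℂ (LinearMap.ker A.mulVecLin) = 0 := by omega
    have hker : LinearMap.ker A.mulVecLin = ⊥ := Submodule.finrank_eq_zero.mp hk
    exact (LinearMap.ker_eq_bot'.mp hker) v (by simpa using hv)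
  · intro hv
    have hker : LinearMap.ker A.mulVecLin = ⊥ := by
      rw [LinearMap.ker_eq_bot']
      intro v h0
      exact hv v (by simpa using h0)
    rw [hker] at h
    simpa using h

lemma rank_full_row_iff {m n : Type} [Fintype m] [Fintype n] [DecidableEq m] (A : Matrix m n ℂ) :
    A.rank = Fintype.card m ↔ ∀ v : m → ℂ, v ᵥ* A = 0 → v = 0 := by
  rw [← Matrix.rank_transpose, rank_full_col_iff]
  simp_rw [Matrix.mulVec_transpose]

lemma mapC_mul [Fintype l] (M : Matrix k l ℝ) (N : Matrix l o ℝ) :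
    mapC (M * N) = mapC M * mapC N :=
  Matrix.map_mul

lemma mapC_add (M N : Matrix k l ℝ) : mapC (M + N) = mapC M + mapC N := by
  ext i j; simp [mapC]

lemma mapC_sub (M N : Matrix k l ℝ) : mapC (M - N) = mapC M - mapC N := by
  ext i j; simp [mapC]

@[simp] lemma mapC_zero : mapC (0 : Matrix k l ℝ) = 0 := by
  ext i j; simp [mapC]

lemma mapC_fromBlocks {k' l' : Type} (A : Matrix k l ℝ) (B : Matrix k l' ℝ)
    (C : Matrix k' l ℝ) (D : Matrix k' l' ℝ) :
    mapC (fromBlocks A B C D) = fromBlocks (mapC A) (mapC B) (mapC C) (mapC D) :=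
  Matrix.fromBlocks_map A B C D _

lemma mapC_fromColumns {l' : Type} (A : Matrix k l ℝ) (B : Matrix k l' ℝ) :
    mapC (fromCols A B) = fromCols (mapC A) (mapC B) := by
  ext i (j | j) <;> rfl

lemma mapC_fromRows {k' : Type} (A : Matrix k l ℝ) (B : Matrix k' l ℝ) :
    mapC (fromRows A B) = fromRows (mapC A) (mapC B) := by
  ext (i | i) j <;> rfl

lemma isUnit_mapC [Fintype k] [DecidableEq k] {M : Matrix k k ℝ} (h : IsUnit M) :
    IsUnit (mapC M) := by
  simpa [RingHom.mapMatrix_apply, mapC] using h.map (RingHom.mapMatrix (algebraMap ℝ ℂ))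

lemma isUnit_mulVec_eq_zero [Fintype k] [DecidableEq k] {M : Matrix k k ℂ}
    (hM : IsUnit M) {v : k → ℂ} (h : M *ᵥ v = 0) : v = 0 := by
  have h2 := congrArg (fun x => M⁻¹ *ᵥ x) h
  simpa [Matrix.mulVec_mulVec, Matrix.nonsing_inv_mul M ((Matrix.isUnit_iff_isUnit_det M).mp hM),
    Matrix.one_mulVec, Matrix.mulVec_zero] using h2

lemma isUnit_vecMul_eq_zero [Fintype k] [DecidableEq k] {M : Matrix k k ℂ}
    (hM : IsUnit M) {v : k → ℂ} (h : v ᵥ* M = 0) : v = 0 := by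
  have h2 := congrArg (fun x => x ᵥ* M⁻¹) h
  simpa [Matrix.vecMul_vecMul, Matrix.mul_nonsing_inv M ((Matrix.isUnit_iff_isUnit_det M).mp hM),
    Matrix.vecMul_one, Matrix.zero_vecMul] using h2

lemma vecMul_smul_one [Fintype k] [DecidableEq k] (μ : ℂ) (v : k → ℂ) :
    v ᵥ* (μ • (1 : Matrix k k ℂ)) = μ • v := by
  ext i
  simp [Matrix.vecMul, dotProduct, Matrix.smul_apply, Matrix.one_apply, mul_comm,
    Finset.sum_ite_eq, Finset.mem_univ]

end Aux


/-- under observability and controllability, the realization `(Â, B̂, Ĉ)` of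
the factorization `[M N]` is observable and controllable, hence minimal. -/
theorem stmt_9 (p r m : ℕ) (hp : 0 < p) (hr : 0 < r) (hm : 0 < m)
    (A11 : Matrix (Fin p) (Fin p) ℝ) (A12 : Matrix (Fin p) (Fin r) ℝ)
    (A21 : Matrix (Fin r) (Fin p) ℝ) (A22 : Matrix (Fin r) (Fin r) ℝ)
    (B1 : Matrix (Fin p) (Fin m) ℝ) (B2 : Matrix (Fin r) (Fin m) ℝ)
    (hobs : ObsPair A12 A22)
    (hctrb : CtrbPair (fromBlocks A11 A12 A21 A22) (fromRows B1 B2))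
    (Bx Cx : Matrix (Fin p) (Fin p) ℝ) (hBx : IsUnit Bx) (hCx : IsUnit Cx)
    (Ax : Matrix (Fin p) (Fin p) ℝ) (K : Matrix (Fin r) (Fin p) ℝ) :
    let Ahat : Matrix (Fin p ⊕ Fin r) (Fin p ⊕ Fin r) ℝ :=
      fromBlocks Ax (Bx * A12) 0 (A22 + K * A12)
    let Bhat : Matrix (Fin p ⊕ Fin r) (Fin p ⊕ Fin m) ℝ :=
      fromBlocks (Ax * Bx - Bx * A11 + Bx * A12 * K) (Bx * B1)
        (K * A12 * K + A22 * K - K * A11 - A21) (K * B1 + B2)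
    let Chat : Matrix (Fin p) (Fin p ⊕ Fin r) ℝ :=
      fromCols Cx (0 : Matrix (Fin p) (Fin r) ℝ)
    (∀ μ : ℂ, (fromRows (mapC Ahat - μ • (1 : Matrix (Fin p ⊕ Fin r) (Fin p ⊕ Fin r) ℂ))
        (mapC Chat)).rank = p + r) ∧
    (∀ μ : ℂ, (fromCols (mapC Ahat - μ • (1 : Matrix (Fin p ⊕ Fin r) (Fin p ⊕ Fin r) ℂ))
        (mapC Bhat)).rank = p + r) := by
  intro Ahat Bhat Chat
  have hBx' : IsUnit (mapC Bx) := isUnit_mapC hBx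
  have hCx' : IsUnit (mapC Cx) := isUnit_mapC hCx
  constructor
  · -- observability
    intro μ
    rw [show p + r = Fintype.card (Fin p ⊕ Fin r) by simp, rank_full_col_iff]
    intro v hv
    set v1 := v ∘ Sum.inl with hv1def
    set v2 := v ∘ Sum.inr with hv2def
    have hvsum : v = Sum.elim v1 v2 := by funext i; cases i <;> rfl
    rw [fromRows_mulVec] at hv
    have h1 : (mapC Ahat - μ • 1) *ᵥ v = 0 := by
      funext i; simpa using congrFun hv (Sum.inl i)
    have h2 : mapC Chat *ᵥ v = 0 := by
      funext i; simpa using congrFun hv (Sum.inr i)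
    rw [hvsum] at h1 h2
    rw [show Chat = fromCols Cx 0 from rfl, mapC_fromColumns,
      fromCols_mulVec_sumElim] at h2
    have hv10 : v1 = 0 := isUnit_mulVec_eq_zero hCx' (by simpa using h2)
    rw [show Ahat = fromBlocks Ax (Bx * A12) 0 (A22 + K * A12) from rfl, mapC_fromBlocks,
      Matrix.sub_mulVec, Matrix.smul_mulVec, Matrix.one_mulVec,
      Matrix.fromBlocks_mulVec] at h1
    have e1 : mapC Ax *ᵥ v1 + mapC (Bx * A12) *ᵥ v2 - μ • v1 = 0 := by
      funext i; simpa using congrFun h1 (Sum.inl i)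
    have e2 : mapC (A22 + K * A12) *ᵥ v2 - μ • v2 = 0 := by
      funext i; simpa [Matrix.zero_mulVec] using congrFun h1 (Sum.inr i)
    have hA12v2 : mapC A12 *ᵥ v2 = 0 := by
      apply isUnit_mulVec_eq_zero hBx'
      rw [Matrix.mulVec_mulVec, ← mapC_mul]
      have e1' := e1
      rw [hv10] at e1'
      simpa using e1'
    have e2' : (mapC A22 - μ • 1) *ᵥ v2 = 0 := by
      rw [mapC_add, mapC_mul, Matrix.add_mulVec, ← Matrix.mulVec_mulVec, hA12v2,
        Matrix.mulVec_zero, add_zero] at e2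
      rw [Matrix.sub_mulVec, Matrix.smul_mulVec, Matrix.one_mulVec]
      exact e2
    have hv20 : v2 = 0 := by
      have hobs' := (rank_full_col_iff
        (fromRows (mapC A22 - μ • (1 : Matrix (Fin r) (Fin r) ℂ)) (mapC A12))).mp
        (by simpa using hobs μ)
      apply hobs' v2
      rw [fromRows_mulVec, e2', hA12v2]
      funext i; cases i <;> rfl
    rw [hvsum, hv10, hv20]
    funext i; cases i <;> rfl
  · -- controllability
    intro μ
    rw [show p + r = Fintype.card (Fin p ⊕ Fin r) by simp, rank_full_row_iff]
    intro w hw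
    set w1 := w ∘ Sum.inl with hw1def
    set w2 := w ∘ Sum.inr with hw2def
    have hwsum : w = Sum.elim w1 w2 := by funext i; cases i <;> rfl
    rw [hwsum, vecMul_fromCols] at hw
    have hA : Sum.elim w1 w2 ᵥ* (mapC Ahat - μ • 1) = 0 := by
      funext i; simpa using congrFun hw (Sum.inl i)
    have hB : Sum.elim w1 w2 ᵥ* mapC Bhat = 0 := by
      funext i; simpa using congrFun hw (Sum.inr i)
    rw [show Ahat = fromBlocks Ax (Bx * A12) 0 (A22 + K * A12) from rfl, mapC_fromBlocks,
      Matrix.vecMul_sub, vecMul_smul_one, Matrix.vecMul_fromBlocks] at hA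
    rw [show Bhat = fromBlocks (Ax * Bx - Bx * A11 + Bx * A12 * K) (Bx * B1)
        (K * A12 * K + A22 * K - K * A11 - A21) (K * B1 + B2) from rfl,
      mapC_fromBlocks, Matrix.vecMul_fromBlocks] at hB
    have e1 : w1 ᵥ* mapC Ax - μ • w1 = 0 := by
      funext i; simpa [Matrix.vecMul_zero] using congrFun hA (Sum.inl i)
    have e2 : w1 ᵥ* mapC (Bx * A12) + w2 ᵥ* mapC (A22 + K * A12) - μ • w2 = 0 := by
      funext i; simpa using congrFun hA (Sum.inr i)
    have e3 : w1 ᵥ* mapC (Ax * Bx - Bx * A11 + Bx * A12 * K)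
        + w2 ᵥ* mapC (K * A12 * K + A22 * K - K * A11 - A21) = 0 := by
      funext i; simpa using congrFun hB (Sum.inl i)
    have e4 : w1 ᵥ* mapC (Bx * B1) + w2 ᵥ* mapC (K * B1 + B2) = 0 := by
      funext i; simpa using congrFun hB (Sum.inr i)
    set u1 : Fin p → ℂ := w1 ᵥ* mapC Bx + w2 ᵥ* mapC K with hu1def
    have g1 : u1 ᵥ* mapC A11 + w2 ᵥ* mapC A21 - μ • u1 = 0 := by
      have c1 := congrArg (fun x => x ᵥ* mapC Bx) e1
      have c2 := congrArg (fun x => x ᵥ* mapC K) e2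
      simp only [hu1def, mapC_mul, mapC_add, mapC_sub, Matrix.sub_vecMul, Matrix.add_vecMul,
        Matrix.vecMul_add, Matrix.vecMul_sub, Matrix.smul_vecMul, ← Matrix.vecMul_vecMul,
        Matrix.zero_vecMul, smul_add] at c1 c2 e3 ⊢
      linear_combination (norm := abel1) c1 + c2 - e3
    have g2 : u1 ᵥ* mapC A12 + w2 ᵥ* mapC A22 - μ • w2 = 0 := by
      have e2' := e2
      simp only [hu1def, mapC_mul, mapC_add, Matrix.add_vecMul,
        Matrix.vecMul_add, Matrix.smul_vecMul, ← Matrix.vecMul_vecMul] at e2' ⊢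
      linear_combination (norm := abel1) e2'
    have g3 : u1 ᵥ* mapC B1 + w2 ᵥ* mapC B2 = 0 := by
      have e4' := e4
      simp only [hu1def, mapC_mul, mapC_add, Matrix.add_vecMul,
        Matrix.vecMul_add, ← Matrix.vecMul_vecMul] at e4' ⊢
      linear_combination (norm := abel1) e4'
    have hctrb' := (rank_full_row_iff (fromCols
        (mapC (fromBlocks A11 A12 A21 A22) - μ • (1 : Matrix (Fin p ⊕ Fin r) (Fin p ⊕ Fin r) ℂ))
        (mapC (fromRows B1 B2)))).mp (by simpa using hctrb μ)
    have hu : Sum.elim u1 w2 = 0 := by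
      apply hctrb'
      rw [vecMul_fromCols]
      have hA' : Sum.elim u1 w2 ᵥ* (mapC (fromBlocks A11 A12 A21 A22)
          - μ • (1 : Matrix (Fin p ⊕ Fin r) (Fin p ⊕ Fin r) ℂ)) = 0 := by
        rw [Matrix.vecMul_sub, vecMul_smul_one, mapC_fromBlocks, Matrix.vecMul_fromBlocks]
        funext i
        cases i with
        | inl j => simpa using congrFun g1 j
        | inr j => simpa using congrFun g2 j
      have hB' : Sum.elim u1 w2 ᵥ* mapC (fromRows B1 B2) = 0 := by
        rw [mapC_fromRows, sumElim_vecMul_fromRows]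
        exact g3
      rw [hA', hB']
      funext i; cases i <;> rfl
    have hw2 : w2 = 0 := by funext j; simpa using congrFun hu (Sum.inr j)
    have hu1 : u1 = 0 := by funext j; simpa using congrFun hu (Sum.inl j)
    have hw1 : w1 = 0 := by
      apply isUnit_vecMul_eq_zero hBx'
      rw [hu1def, hw2] at hu1
      simpa [Matrix.zero_vecMul] using hu1
    rw [hwsum, hw1, hw2]
    funext i; cases i <;> rfl
end
end

section
/- Let F1 ∈ ℝ^{p×p}, F2 ∈ ℝ^{(n−p)×p}, let U ∈ ℝ^{p×p} be invertible, and let K ∈ ℝ^{(n−p)×p} satisfy the non-symmetric algebraic Riccati equation K·(A11 + F1) − K·A12·K + (A21 + F2) − A22·K = 0; set A_x := A11 + F1 − A12·K and define [M N] := [U, 0]·(λI_n − [[A11 + F1, A12],[A21 + F2, A22]])^{-1}·[[F1, B1],[F2, B2]] + [U, 0] with M ∈ F^{p×p}, N ∈ F^{p×m}. Then, with W and V the SRTR pair obtained from this same K, one has [W V] = [λI_p, 0] + (λI_p − A_x)·U^{-1}·[−M, N]; equivalently, W = λI_p − (λI_p − A_x)·U^{-1}·M and V = (λI_p − A_x)·U^{-1}·N.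 -/
open Matrix Polynomial

set_option synthInstance.maxHeartbeats 1000000
set_option maxHeartbeats 1000000

noncomputable section

-- auxiliary lemmas

lemma mapF_add {k l : Type} (M N : Matrix k l ℝ) : mapF (M + N) = mapF M + mapF N := by
  ext i j; simp [mapF]

lemma mapF_sub {k l : Type} (M N : Matrix k l ℝ) : mapF (M - N) = mapF M - mapF N := by
  ext i j; simp [mapF]

lemma mapF_neg {k l : Type} (M : Matrix k l ℝ) : mapF (-M) = -(mapF M) := by
  ext i j; simp [mapF]

lemma mapF_zero {k l : Type} : mapF (0 : Matrix k l ℝ) = 0 := by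
  ext i j; simp [mapF]

lemma mapF_mul {k l o : Type} [Fintype l] (M : Matrix k l ℝ) (N : Matrix l o ℝ) :
    mapF (M * N) = mapF M * mapF N := by
  ext i j; simp [mapF, Matrix.mul_apply, map_sum]

lemma mapF_fromBlocks {k l o q : Type} (a : Matrix k l ℝ) (b : Matrix k q ℝ)
    (c : Matrix o l ℝ) (d : Matrix o q ℝ) :
    mapF (fromBlocks a b c d) = fromBlocks (mapF a) (mapF b) (mapF c) (mapF d) := by
  unfold mapF; rw [Matrix.fromBlocks_map]

lemma lamI_eq {k : Type} [Fintype k] [DecidableEq k] (M : Matrix k k ℝ) :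
    lamI M = (charmatrix M).map (algebraMap ℝ[X] FF) := by
  ext i j
  by_cases h : i = j <;>
    simp [h, lamI, mapF, smul_eq_mul, RatFunc.algebraMap_X, charmatrix, diagonal,
      Matrix.one_apply, lam, mul_one, IsScalarTower.algebraMap_apply ℝ ℝ[X] FF]

lemma lamI_isUnit {k : Type} [Fintype k] [DecidableEq k] (M : Matrix k k ℝ) :
    IsUnit (lamI M) := by
  rw [Matrix.isUnit_iff_isUnit_det, lamI_eq, ← RingHom.mapMatrix_apply, ← RingHom.map_det]
  rw [isUnit_iff_ne_zero]
  intro h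
  exact (M.charpoly_monic.ne_zero) (IsFractionRing.injective ℝ[X] FF (by simpa [Matrix.charpoly] using h))

lemma lamI_fromBlocks {k l : Type} [Fintype k] [DecidableEq k] [Fintype l] [DecidableEq l]
    (a : Matrix k k ℝ) (b : Matrix k l ℝ) (c : Matrix l k ℝ) (d : Matrix l l ℝ) :
    lamI (fromBlocks a b c d) =
      fromBlocks (lamI a) (-(mapF b)) (-(mapF c)) (lamI d) := by
  unfold lamI
  rw [← fromBlocks_one, mapF_fromBlocks, fromBlocks_smul]
  ext (i | i) (j | j) <;> simp [fromBlocks]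

lemma fromColumns_add {k l o : Type} (a c : Matrix k l FF) (b d : Matrix k o FF) :
    fromCols a b + fromCols c d = fromCols (a + c) (b + d) := by
  ext i (j | j) <;> simp [fromCols]


/-- if `K` solves the non-symmetric algebraic Riccati equation, the stable
SRTR pair obtained from the same `K` is recovered from the LCF `[M N]` via
`[W V] = [λ I_p, 0] + (λ I_p - A_x) U⁻¹ [-M, N]`. -/
theorem stmt_11 (p r m : ℕ) (hp : 0 < p) (hr : 0 < r) (hm : 0 < m)
    (A11 : Matrix (Fin p) (Fin p) ℝ) (A12 : Matrix (Fin p) (Fin r) ℝ)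
    (A21 : Matrix (Fin r) (Fin p) ℝ) (A22 : Matrix (Fin r) (Fin r) ℝ)
    (B1 : Matrix (Fin p) (Fin m) ℝ) (B2 : Matrix (Fin r) (Fin m) ℝ)
    (F1 : Matrix (Fin p) (Fin p) ℝ) (F2 : Matrix (Fin r) (Fin p) ℝ)
    (U : Matrix (Fin p) (Fin p) ℝ) (hU : IsUnit U)
    (K : Matrix (Fin r) (Fin p) ℝ)
    (hric : K * (A11 + F1) - K * A12 * K + (A21 + F2) - A22 * K = 0) :
    let Ax : Matrix (Fin p) (Fin p) ℝ := A11 + F1 - A12 * K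
    let MN : Matrix (Fin p) (Fin p ⊕ Fin m) FF :=
      fromCols (mapF U) (0 : Matrix (Fin p) (Fin r) FF) *
          (lamI (fromBlocks (A11 + F1) A12 (A21 + F2) A22))⁻¹ *
          mapF (fromBlocks F1 B1 F2 B2) +
        fromCols (mapF U) (0 : Matrix (Fin p) (Fin m) FF)
    srtrW A11 A12 A21 A22 K =
      lam • (1 : Matrix (Fin p) (Fin p) FF) -
        (lam • (1 : Matrix (Fin p) (Fin p) FF) - mapF Ax) * (mapF U)⁻¹ * MN.toCols₁ ∧
    srtrV A12 A22 B1 B2 K =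
      (lam • (1 : Matrix (Fin p) (Fin p) FF) - mapF Ax) * (mapF U)⁻¹ * MN.toCols₂ := by
  intro Ax MN
  have hAxdef : Ax = A11 + F1 - A12 * K := rfl
  set P : Matrix (Fin p) (Fin p) FF := lamI Ax with hPdef
  set Q : Matrix (Fin r) (Fin r) FF := lamI (A22 + K * A12) with hQdef
  have hP : IsUnit P := lamI_isUnit _
  have hQ : IsUnit Q := lamI_isUnit _
  have hPd : IsUnit P.det := (Matrix.isUnit_iff_isUnit_det _).mp hP
  have hQd : IsUnit Q.det := (Matrix.isUnit_iff_isUnit_det _).mp hQ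
  have hU' : IsUnit (mapF U) := hU.map (algebraMap ℝ FF).mapMatrix.toMonoidHom
  have hUd : IsUnit (mapF U).det := (Matrix.isUnit_iff_isUnit_det _).mp hU'
  have hPP : P * P⁻¹ = 1 := Matrix.mul_nonsing_inv _ hPd
  have hQQ : Q * Q⁻¹ = 1 := Matrix.mul_nonsing_inv _ hQd
  have hUU : (mapF U)⁻¹ * mapF U = 1 := Matrix.nonsing_inv_mul _ hUd
  set T : Matrix (Fin p ⊕ Fin r) (Fin p ⊕ Fin r) FF := fromBlocks 1 0 (mapF K) 1 with hT
  set Ti : Matrix (Fin p ⊕ Fin r) (Fin p ⊕ Fin r) FF :=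
    fromBlocks 1 0 (-(mapF K)) 1 with hTi
  have hTTi : T * Ti = 1 := by
    rw [hT, hTi, fromBlocks_multiply, ← fromBlocks_one]
    congr 1 <;> simp
  have hTiT : Ti * T = 1 := by
    rw [hT, hTi, fromBlocks_multiply, ← fromBlocks_one]
    congr 1 <;> simp
  have hexp : mapF K * (mapF A11 + mapF F1) - mapF K * mapF A12 * mapF K +
      (mapF A21 + mapF F2) - mapF A22 * mapF K = 0 := by
    have := congrArg mapF hric
    simpa only [mapF_sub, mapF_add, mapF_mul, mapF_zero] using this
  -- similarity
  have hsim : T * lamI (fromBlocks (A11 + F1) A12 (A21 + F2) A22) * Ti =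
      fromBlocks P (-(mapF A12)) 0 Q := by
    rw [lamI_fromBlocks, hT, hTi, fromBlocks_multiply, fromBlocks_multiply]
    rw [fromBlocks_inj]
    refine ⟨?_, by simp, ?_, ?_⟩
    · simp only [hPdef, hAxdef, lamI, mapF_sub, mapF_add, mapF_mul]
      simp only [Matrix.one_mul, Matrix.mul_one, Matrix.zero_mul, Matrix.mul_zero, add_zero,
        zero_add, Matrix.neg_mul, Matrix.mul_neg, neg_neg, Matrix.mul_add, Matrix.add_mul,
        Matrix.mul_sub, Matrix.sub_mul, Matrix.mul_assoc, Matrix.smul_mul, Matrix.mul_smul, smul_zero, neg_zero]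
      try abel
    · simp only [lamI, mapF_add, mapF_mul]
      have hexp' : (0 : Matrix (Fin r) (Fin p) FF) =
          -(mapF K * (mapF A11 + mapF F1) - mapF K * mapF A12 * mapF K +
            (mapF A21 + mapF F2) - mapF A22 * mapF K) := by rw [hexp, neg_zero]
      conv_rhs => rw [hexp']
      simp only [Matrix.one_mul, Matrix.mul_one, Matrix.zero_mul, Matrix.mul_zero, add_zero,
        zero_add, Matrix.neg_mul, Matrix.mul_neg, neg_neg, Matrix.mul_add, Matrix.add_mul,
        Matrix.mul_sub, Matrix.sub_mul, Matrix.mul_assoc, Matrix.smul_mul, Matrix.mul_smul, smul_zero, neg_zero]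
      try abel
    · simp only [hQdef, lamI, mapF_add, mapF_mul]
      simp only [Matrix.one_mul, Matrix.mul_one, Matrix.zero_mul, Matrix.mul_zero, add_zero,
        zero_add, Matrix.neg_mul, Matrix.mul_neg, neg_neg, Matrix.mul_add, Matrix.add_mul,
        Matrix.mul_sub, Matrix.sub_mul, Matrix.mul_assoc, Matrix.smul_mul, Matrix.mul_smul, smul_zero, neg_zero]
      try abel
  have hblk : lamI (fromBlocks (A11 + F1) A12 (A21 + F2) A22) =
      Ti * fromBlocks P (-(mapF A12)) 0 Q * T := by
    rw [← hsim]
    calc lamI (fromBlocks (A11 + F1) A12 (A21 + F2) A22)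
        = (Ti * T) * lamI (fromBlocks (A11 + F1) A12 (A21 + F2) A22) * (Ti * T) := by
          rw [hTiT]; simp
      _ = Ti * (T * lamI (fromBlocks (A11 + F1) A12 (A21 + F2) A22) * Ti) * T := by
          noncomm_ring
  have hinv : (lamI (fromBlocks (A11 + F1) A12 (A21 + F2) A22))⁻¹ =
      Ti * fromBlocks P⁻¹ (P⁻¹ * mapF A12 * Q⁻¹) 0 Q⁻¹ * T := by
    apply Matrix.inv_eq_right_inv
    rw [hblk]
    calc Ti * fromBlocks P (-(mapF A12)) 0 Q * T *
          (Ti * fromBlocks P⁻¹ (P⁻¹ * mapF A12 * Q⁻¹) 0 Q⁻¹ * T)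
        = Ti * (fromBlocks P (-(mapF A12)) 0 Q * (T * Ti) *
            fromBlocks P⁻¹ (P⁻¹ * mapF A12 * Q⁻¹) 0 Q⁻¹) * T := by
          noncomm_ring
      _ = Ti * (fromBlocks P (-(mapF A12)) 0 Q *
            fromBlocks P⁻¹ (P⁻¹ * mapF A12 * Q⁻¹) 0 Q⁻¹) * T := by
          rw [hTTi]; simp
      _ = Ti * T := by
          rw [fromBlocks_multiply]
          have h12 : P * (P⁻¹ * mapF A12 * Q⁻¹) + -(mapF A12) * Q⁻¹ = 0 := by
            rw [← Matrix.mul_assoc, ← Matrix.mul_assoc, hPP, Matrix.one_mul, Matrix.neg_mul,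
              add_neg_cancel]
          rw [hPP, hQQ, h12]
          simp [fromBlocks_one]
      _ = 1 := hTiT
  -- compute MN
  have hMN : MN = fromCols
      (mapF U * P⁻¹ * (mapF F1 + mapF A12 * Q⁻¹ * mapF (K * F1 + F2)) + mapF U)
      (mapF U * P⁻¹ * (mapF B1 + mapF A12 * Q⁻¹ * mapF (K * B1 + B2))) := by
    show fromCols (mapF U) 0 * (lamI (fromBlocks (A11 + F1) A12 (A21 + F2) A22))⁻¹ *
        mapF (fromBlocks F1 B1 F2 B2) + fromCols (mapF U) 0 = _
    rw [hinv, hTi, hT, mapF_fromBlocks, fromBlocks_multiply, fromBlocks_multiply,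
      fromCols_mul_fromBlocks, fromCols_mul_fromBlocks, fromColumns_add,
      fromCols_ext_iff]
    constructor
    · simp only [mapF_add, mapF_mul]
      simp only [Matrix.one_mul, Matrix.mul_one, Matrix.zero_mul, Matrix.mul_zero, add_zero,
        zero_add, Matrix.neg_mul, Matrix.mul_neg, neg_neg, Matrix.mul_add, Matrix.add_mul,
        Matrix.mul_sub, Matrix.sub_mul, Matrix.mul_assoc, Matrix.smul_mul, Matrix.mul_smul, smul_zero, neg_zero]
      try abel
    · simp only [mapF_add, mapF_mul]
      simp only [Matrix.one_mul, Matrix.mul_one, Matrix.zero_mul, Matrix.mul_zero, add_zero,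
        zero_add, Matrix.neg_mul, Matrix.mul_neg, neg_neg, Matrix.mul_add, Matrix.add_mul,
        Matrix.mul_sub, Matrix.sub_mul, Matrix.mul_assoc, Matrix.smul_mul, Matrix.mul_smul, smul_zero, neg_zero]
      try abel
  have hPexp : lam • (1 : Matrix (Fin p) (Fin p) FF) - mapF Ax = P := rfl
  have hcan : ∀ {k : ℕ} (S : Matrix (Fin p) (Fin k) FF),
      P * (mapF U)⁻¹ * (mapF U * P⁻¹ * S) = S := by
    intro k S
    calc P * (mapF U)⁻¹ * (mapF U * P⁻¹ * S)
        = P * ((mapF U)⁻¹ * (mapF U * (P⁻¹ * S))) := by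
          simp only [Matrix.mul_assoc]
      _ = P * (((mapF U)⁻¹ * mapF U) * (P⁻¹ * S)) := by
          rw [← Matrix.mul_assoc ((mapF U)⁻¹)]
      _ = S := by rw [hUU, Matrix.one_mul, ← Matrix.mul_assoc, hPP, Matrix.one_mul]
  constructor
  · rw [hMN, toCols₁_fromCols, hPexp]
    have hAK : AKmat A11 A12 A21 A22 K = -(K * F1 + F2) := by
      have h : (K * A11 - K * A12 * K + A21 - A22 * K) + (K * F1 + F2) =
          K * (A11 + F1) - K * A12 * K + (A21 + F2) - A22 * K := by
        rw [Matrix.mul_add K A11 F1]; abel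
      unfold AKmat
      rw [eq_neg_iff_add_eq_zero, h, hric]
    have hc : P * (mapF U)⁻¹ *
        (mapF U * P⁻¹ * (mapF F1 + mapF A12 * Q⁻¹ * mapF (K * F1 + F2)) + mapF U) =
        (mapF F1 + mapF A12 * Q⁻¹ * mapF (K * F1 + F2)) + P := by
      rw [mul_add, hcan]
      congr 1
      rw [mul_assoc, hUU, mul_one]
    rw [hc]
    unfold srtrW
    rw [hAK, ← hQdef]
    have hAx : mapF Ax = mapF (A11 - A12 * K) + mapF F1 := by
      show mapF (A11 + F1 - A12 * K) = _
      rw [← mapF_add]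
      congr 1
      abel
    rw [mapF_neg, Matrix.mul_neg, ← hPexp, hAx]
    abel
  · rw [hMN, toCols₂_fromCols, hPexp, hcan]
    rfl
end
end
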